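/- Every mixed unitary channel Ψ(ρ) = Σ_i p_i U_i ρ U_i† (with p_i ≥ 0, Σ p_i = 1, U_i unitary) satisfies T^Q(Ψ(ρ^A), Ψ(ρ^B)) ≤ T^Q(ρ^A, ρ^B) for all density matrices ρ^A, ρ^B of order N. -/

import Mathlib

open Matrix Complex
open scoped Matrix Kronecker ComplexOrder

noncomputable section

/-- Partial trace over the second factor. -/
def ptraceB {N : ℕ} (ρ : Matrix (Fin N × Fin N) (Fin N × Fin N) ℂ) :
    Matrix (Fin N) (Fin N) ℂ :=
  Matrix.of fun i j => ∑ k, ρ (i, k) (j, k)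

/-- Partial trace over the first factor. -/
def ptraceA {N : ℕ} (ρ : Matrix (Fin N × Fin N) (Fin N × Fin N) ℂ) :
    Matrix (Fin N) (Fin N) ℂ :=
  Matrix.of fun i j => ∑ k, ρ (k, i) (k, j)

/-- A density matrix: positive semidefinite with unit trace. -/
def IsDensity {n : Type*} [Fintype n] (ρ : Matrix n n ℂ) : Prop :=
  ρ.PosSemidef ∧ ρ.trace = 1

/-- The set of couplings of two states. -/
def couplings {N : ℕ} (ρA ρB : Matrix (Fin N) (Fin N) ℂ) :
    Set (Matrix (Fin N × Fin N) (Fin N × Fin N) ℂ) :=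
  {ρ | IsDensity ρ ∧ ptraceB ρ = ρA ∧ ptraceA ρ = ρB}

/-- The swap operator on `ℂ^N ⊗ ℂ^N`. -/
def swapOp (N : ℕ) : Matrix (Fin N × Fin N) (Fin N × Fin N) ℂ :=
  Matrix.of fun p q => if p.1 = q.2 ∧ p.2 = q.1 then 1 else 0

/-- The projective quantum cost matrix `C = (1/2)(I - S)`. -/
def projCost (N : ℕ) : Matrix (Fin N × Fin N) (Fin N × Fin N) ℂ :=
  (1 / 2 : ℂ) • ((1 : Matrix (Fin N × Fin N) (Fin N × Fin N) ℂ) - swapOp N)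

/-- The optimal quantum transport cost for a cost matrix `C`. -/
def TQ {N : ℕ} (C : Matrix (Fin N × Fin N) (Fin N × Fin N) ℂ)
    (ρA ρB : Matrix (Fin N) (Fin N) ℂ) : ℝ :=
  sInf {x : ℝ | ∃ ρ ∈ couplings ρA ρB, ((C * ρ).trace).re = x}

/-! ### Auxiliary lemmas -/

lemma swap_herm (N : ℕ) : (swapOp N)ᴴ = swapOp N := by
  ext p q
  simp only [conjTranspose_apply, swapOp, of_apply]
  have : (q.1 = p.2 ∧ q.2 = p.1) ↔ (p.1 = q.2 ∧ p.2 = q.1) := by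
    constructor <;> rintro ⟨h1, h2⟩ <;> exact ⟨h2.symm, h1.symm⟩
  simp only [this]
  split_ifs <;> simp

lemma swap_mul_swap (N : ℕ) : swapOp N * swapOp N = 1 := by
  ext p q
  simp [Matrix.mul_apply, swapOp, Fintype.sum_prod_type, one_apply, ite_and,
    Finset.sum_ite_eq, Finset.sum_ite_eq', Prod.ext_iff, eq_comm]

lemma kron_conjT {N : ℕ} (A B : Matrix (Fin N) (Fin N) ℂ) : (A ⊗ₖ B)ᴴ = Aᴴ ⊗ₖ Bᴴ := by
  ext p q
  simp [conjTranspose_apply, kroneckerMap_apply, mul_comm]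

lemma swap_comm_kron {N : ℕ} (U : Matrix (Fin N) (Fin N) ℂ) :
    swapOp N * (U ⊗ₖ U) = (U ⊗ₖ U) * swapOp N := by
  ext p q
  simp [Matrix.mul_apply, swapOp, kroneckerMap_apply, Fintype.sum_prod_type, ite_and,
    ite_mul, mul_ite, Finset.sum_ite_eq, Finset.sum_ite_eq', mul_comm]

lemma ptraceB_conj {N : ℕ} (U : Matrix (Fin N) (Fin N) ℂ) (hU : Uᴴ * U = 1)
    (ρ : Matrix (Fin N × Fin N) (Fin N × Fin N) ℂ) :
    ptraceB ((U ⊗ₖ U) * ρ * (U ⊗ₖ U)ᴴ) = U * ptraceB ρ * Uᴴ := by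
  have key : ∀ b d : Fin N, (∑ k, U k d * (starRingEnd ℂ) (U k b)) = (1 : Matrix (Fin N) (Fin N) ℂ) b d := by
    intro b d
    rw [← hU]
    simp [Matrix.mul_apply, conjTranspose_apply, mul_comm]
  ext i j
  simp only [ptraceB, of_apply, Matrix.mul_apply, conjTranspose_apply, kroneckerMap_apply,
    Fintype.sum_prod_type, star_mul', Finset.sum_mul, Finset.mul_sum]
  calc
    ∑ k, ∑ a, ∑ b, ∑ c, ∑ d,
        U i c * U k d * ρ (c, d) (a, b) * (star (U j a) * star (U k b))
      = ∑ a, ∑ b, ∑ c, ∑ d,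
          (U i c * ρ (c, d) (a, b) * star (U j a)) * (∑ k, U k d * (starRingEnd ℂ) (U k b)) := by
        rw [Finset.sum_comm]
        refine Finset.sum_congr rfl fun a _ => ?_
        rw [Finset.sum_comm]
        refine Finset.sum_congr rfl fun b _ => ?_
        rw [Finset.sum_comm]
        refine Finset.sum_congr rfl fun c _ => ?_
        rw [Finset.sum_comm]
        refine Finset.sum_congr rfl fun d _ => ?_
        rw [Finset.mul_sum]
        exact Finset.sum_congr rfl fun k _ => by simp only [Complex.star_def]; ring
    _ = ∑ a, ∑ b, ∑ c, U i c * ρ (c, b) (a, b) * star (U j a) := by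
        simp [key, one_apply, mul_ite, mul_one, mul_zero, Finset.sum_ite_eq]
    _ = ∑ a, ∑ c, ∑ b, U i c * ρ (c, b) (a, b) * star (U j a) :=
        Finset.sum_congr rfl fun a _ => by rw [Finset.sum_comm]

lemma ptraceA_conj {N : ℕ} (U : Matrix (Fin N) (Fin N) ℂ) (hU : Uᴴ * U = 1)
    (ρ : Matrix (Fin N × Fin N) (Fin N × Fin N) ℂ) :
    ptraceA ((U ⊗ₖ U) * ρ * (U ⊗ₖ U)ᴴ) = U * ptraceA ρ * Uᴴ := by
  have key : ∀ b d : Fin N, (∑ k, U k d * (starRingEnd ℂ) (U k b)) = (1 : Matrix (Fin N) (Fin N) ℂ) b d := by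
    intro b d
    rw [← hU]
    simp [Matrix.mul_apply, conjTranspose_apply, mul_comm]
  ext i j
  simp only [ptraceA, of_apply, Matrix.mul_apply, conjTranspose_apply, kroneckerMap_apply,
    Fintype.sum_prod_type, star_mul', Finset.sum_mul, Finset.mul_sum]
  calc
    ∑ k, ∑ a, ∑ b, ∑ c, ∑ d,
        U k c * U i d * ρ (c, d) (a, b) * (star (U k a) * star (U j b))
      = ∑ a, ∑ b, ∑ c, ∑ d,
          (U i d * ρ (c, d) (a, b) * star (U j b)) * (∑ k, U k c * (starRingEnd ℂ) (U k a)) := by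
        rw [Finset.sum_comm]
        refine Finset.sum_congr rfl fun a _ => ?_
        rw [Finset.sum_comm]
        refine Finset.sum_congr rfl fun b _ => ?_
        rw [Finset.sum_comm]
        refine Finset.sum_congr rfl fun c _ => ?_
        rw [Finset.sum_comm]
        refine Finset.sum_congr rfl fun d _ => ?_
        rw [Finset.mul_sum]
        exact Finset.sum_congr rfl fun k _ => by simp only [Complex.star_def]; ring
    _ = ∑ a, ∑ b, ∑ d, U i d * ρ (a, d) (a, b) * star (U j b) := by
        simp [key, one_apply, mul_ite, mul_one, mul_zero, Finset.sum_ite_eq]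
    _ = ∑ b, ∑ a, ∑ d, U i d * ρ (a, d) (a, b) * star (U j b) := by
        rw [Finset.sum_comm]
    _ = ∑ b, ∑ d, ∑ a, U i d * ρ (a, d) (a, b) * star (U j b) :=
        Finset.sum_congr rfl fun b _ => by rw [Finset.sum_comm]

lemma real_smul_mat {n m : Type*} (r : ℝ) (M : Matrix n m ℂ) : r • M = (r : ℂ) • M := by
  ext i j
  simp [Matrix.smul_apply, Complex.real_smul]

lemma psd_smul {n : Type*} [Fintype n] {M : Matrix n n ℂ} (hM : M.PosSemidef) {r : ℝ}
    (hr : 0 ≤ r) : ((r : ℂ) • M).PosSemidef := by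
  constructor
  · unfold Matrix.IsHermitian
    rw [conjTranspose_smul, hM.1.eq]
    simp
  · exact (hM.smul (Complex.zero_le_real.mpr hr)).2

lemma psd_trace_nonneg {n : Type*} [Fintype n] [DecidableEq n] {M : Matrix n n ℂ}
    (hM : M.PosSemidef) : 0 ≤ M.trace := by
  unfold Matrix.trace
  apply Finset.sum_nonneg
  intro i _
  exact hM.diag_nonneg

lemma re_nonneg_of_nonneg {z : ℂ} (h : 0 ≤ z) : 0 ≤ z.re := by
  rw [Complex.le_def] at h
  simpa using h.1

lemma projCost_herm (N : ℕ) : (projCost N)ᴴ = projCost N := by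
  unfold projCost
  rw [conjTranspose_smul, conjTranspose_sub, conjTranspose_one, swap_herm]
  norm_num

lemma projCost_idem (N : ℕ) : projCost N * projCost N = projCost N := by
  unfold projCost
  have h : ((1 : Matrix (Fin N × Fin N) (Fin N × Fin N) ℂ) - swapOp N) *
      ((1 : Matrix (Fin N × Fin N) (Fin N × Fin N) ℂ) - swapOp N) =
      (2 : ℂ) • ((1 : Matrix (Fin N × Fin N) (Fin N × Fin N) ℂ) - swapOp N) := by
    rw [Matrix.sub_mul, Matrix.mul_sub, Matrix.mul_sub, one_mul, one_mul, mul_one,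
      swap_mul_swap, two_smul]
    abel
  rw [Matrix.smul_mul, Matrix.mul_smul, h, smul_smul, smul_smul]
  norm_num

lemma projCost_psd (N : ℕ) : (projCost N).PosSemidef := by
  have h : projCost N = (projCost N)ᴴ * projCost N := by
    rw [projCost_herm, projCost_idem]
  rw [h]
  exact posSemidef_conjTranspose_mul_self _

lemma projCost_comm_kron {N : ℕ} (U : Matrix (Fin N) (Fin N) ℂ) :
    projCost N * (U ⊗ₖ U) = (U ⊗ₖ U) * projCost N := by
  unfold projCost
  rw [Matrix.smul_mul, Matrix.mul_smul, Matrix.sub_mul, Matrix.mul_sub, one_mul, mul_one,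
    swap_comm_kron]

lemma ptraceB_sum_smul {N : ℕ} {ι : Type*} [Fintype ι] (c : ι → ℂ)
    (M : ι → Matrix (Fin N × Fin N) (Fin N × Fin N) ℂ) :
    ptraceB (∑ i, c i • M i) = ∑ i, c i • ptraceB (M i) := by
  ext a b
  simp only [ptraceB, of_apply, Matrix.sum_apply, Matrix.smul_apply, smul_eq_mul,
    Finset.mul_sum]
  rw [Finset.sum_comm]

lemma ptraceA_sum_smul {N : ℕ} {ι : Type*} [Fintype ι] (c : ι → ℂ)
    (M : ι → Matrix (Fin N × Fin N) (Fin N × Fin N) ℂ) :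
    ptraceA (∑ i, c i • M i) = ∑ i, c i • ptraceA (M i) := by
  ext a b
  simp only [ptraceA, of_apply, Matrix.sum_apply, Matrix.smul_apply, smul_eq_mul,
    Finset.mul_sum]
  rw [Finset.sum_comm]

lemma kron_mem_couplings {N : ℕ} {ρA ρB : Matrix (Fin N) (Fin N) ℂ}
    (hA : IsDensity ρA) (hB : IsDensity ρB) : ρA ⊗ₖ ρB ∈ couplings ρA ρB := by
  obtain ⟨A, hAeq⟩ : ∃ A : Matrix (Fin N) (Fin N) ℂ, ρA = Aᴴ * A := by
    open scoped MatrixOrder in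
    exact CStarAlgebra.nonneg_iff_eq_star_mul_self.mp hA.1.nonneg
  obtain ⟨B, hBeq⟩ : ∃ B : Matrix (Fin N) (Fin N) ℂ, ρB = Bᴴ * B := by
    open scoped MatrixOrder in
    exact CStarAlgebra.nonneg_iff_eq_star_mul_self.mp hB.1.nonneg
  refine ⟨⟨?_, ?_⟩, ?_, ?_⟩
  · rw [hAeq, hBeq, Matrix.mul_kronecker_mul, ← kron_conjT]
    exact posSemidef_conjTranspose_mul_self _
  · rw [Matrix.trace_kronecker, hA.2, hB.2, mul_one]
  · ext i j
    have : (∑ k, ρB k k) = ρB.trace := rfl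
    simp only [ptraceB, of_apply, kroneckerMap_apply]
    rw [← Finset.mul_sum, this, hB.2, mul_one]
  · ext i j
    have : (∑ k, ρA k k) = ρA.trace := rfl
    simp only [ptraceA, of_apply, kroneckerMap_apply]
    rw [← Finset.sum_mul, this, hA.2, one_mul]

lemma trace_cost_nonneg {N : ℕ} {ρ : Matrix (Fin N × Fin N) (Fin N × Fin N) ℂ}
    (hρ : ρ.PosSemidef) : 0 ≤ ((projCost N * ρ).trace).re := by
  apply re_nonneg_of_nonneg
  have h1 : (projCost N * ρ).trace = (projCost N * ρ * (projCost N)ᴴ).trace := by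
    rw [Matrix.trace_mul_cycle, projCost_herm, projCost_idem]
  rw [h1]
  exact psd_trace_nonneg (hρ.mul_mul_conjTranspose_same _)

set_option maxHeartbeats 1000000 in
theorem TQ_monotone_mixed_unitary {N : ℕ} {ι : Type*} [Fintype ι]
    (p : ι → ℝ) (hp : ∀ i, 0 ≤ p i) (hp1 : ∑ i, p i = 1)
    (U : ι → Matrix (Fin N) (Fin N) ℂ)
    (hU : ∀ i, U i ∈ Matrix.unitaryGroup (Fin N) ℂ)
    (ρA ρB : Matrix (Fin N) (Fin N) ℂ) (hA : IsDensity ρA) (hB : IsDensity ρB) :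
    TQ (projCost N) (∑ i, p i • (U i * ρA * (U i)ᴴ)) (∑ i, p i • (U i * ρB * (U i)ᴴ)) ≤
      TQ (projCost N) ρA ρB := by
  -- basic unitarity facts
  have hUu : ∀ i, (U i)ᴴ * U i = 1 := fun i => by
    have := (Matrix.mem_unitaryGroup_iff'.mp (hU i))
    rwa [Matrix.star_eq_conjTranspose] at this
  have hWu : ∀ i, (U i ⊗ₖ U i)ᴴ * (U i ⊗ₖ U i) = 1 := fun i => by
    rw [kron_conjT, ← Matrix.mul_kronecker_mul, hUu i, Matrix.one_kronecker_one]
  have hsum : (∑ i, ((p i : ℂ))) = 1 := by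
    rw [← Complex.ofReal_sum, hp1, Complex.ofReal_one]
  -- the pushforward of a coupling is a coupling with the same cost
  have main : ∀ ρ ∈ couplings ρA ρB,
      (∑ i, (p i : ℂ) • ((U i ⊗ₖ U i) * ρ * (U i ⊗ₖ U i)ᴴ)) ∈
        couplings (∑ i, p i • (U i * ρA * (U i)ᴴ)) (∑ i, p i • (U i * ρB * (U i)ᴴ)) ∧
      ((projCost N * ∑ i, (p i : ℂ) • ((U i ⊗ₖ U i) * ρ * (U i ⊗ₖ U i)ᴴ)).trace) = ((projCost N * ρ).trace) := by
    rintro ρ ⟨⟨hpsd, htr⟩, hptB, hptA⟩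
    have costInv : ∀ i, (projCost N * ((U i ⊗ₖ U i) * ρ * (U i ⊗ₖ U i)ᴴ)).trace = (projCost N * ρ).trace := by
      intro i
      calc (projCost N * ((U i ⊗ₖ U i) * ρ * (U i ⊗ₖ U i)ᴴ)).trace
          = ((projCost N * (U i ⊗ₖ U i) * ρ) * (U i ⊗ₖ U i)ᴴ).trace := by
            rw [← Matrix.mul_assoc, ← Matrix.mul_assoc]
        _ = ((U i ⊗ₖ U i)ᴴ * (projCost N * (U i ⊗ₖ U i)) * ρ).trace := by
            rw [Matrix.trace_mul_cycle, Matrix.mul_assoc]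
        _ = (projCost N * ρ).trace := by
            rw [projCost_comm_kron, ← Matrix.mul_assoc, hWu i, one_mul]
    refine ⟨⟨⟨?_, ?_⟩, ?_, ?_⟩, ?_⟩
    · -- PSD
      apply Finset.sum_induction _ _ (fun A B hA' hB' => hA'.add hB') Matrix.PosSemidef.zero
      intro i _
      exact psd_smul (hpsd.mul_mul_conjTranspose_same _) (hp i)
    · -- trace one
      have : ∀ i, ((U i ⊗ₖ U i) * ρ * (U i ⊗ₖ U i)ᴴ).trace = 1 := by
        intro i
        rw [Matrix.trace_mul_cycle, hWu i, one_mul, htr]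
      simp only [Matrix.trace_sum, Matrix.trace_smul, this, smul_eq_mul, mul_one]
      exact hsum
    · -- ptraceB
      rw [ptraceB_sum_smul]
      refine Finset.sum_congr rfl fun i _ => ?_
      rw [ptraceB_conj (U i) (hUu i), hptB, real_smul_mat]
    · -- ptraceA
      rw [ptraceA_sum_smul]
      refine Finset.sum_congr rfl fun i _ => ?_
      rw [ptraceA_conj (U i) (hUu i), hptA, real_smul_mat]
    · -- cost invariance
      rw [Finset.mul_sum]
      simp only [Matrix.mul_smul, Matrix.trace_sum, Matrix.trace_smul]
      calc (∑ i, (p i : ℂ) • (projCost N * ((U i ⊗ₖ U i) * ρ * (U i ⊗ₖ U i)ᴴ)).trace)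
          = ∑ i, (p i : ℂ) • (projCost N * ρ).trace := by
            exact Finset.sum_congr rfl fun i _ => by rw [costInv i]
        _ = (projCost N * ρ).trace := by
            rw [← Finset.sum_smul, hsum, one_smul]
  -- conclude by comparing infima
  apply csInf_le_csInf
  · exact ⟨0, fun x ⟨ρ, hρ, hx⟩ => hx ▸ trace_cost_nonneg hρ.1.1⟩
  · exact ⟨((projCost N * (ρA ⊗ₖ ρB)).trace).re, ρA ⊗ₖ ρB, kron_mem_couplings hA hB, rfl⟩
  · rintro x ⟨ρ, hρ, hx⟩
    obtain ⟨hmem, hcost⟩ := main ρ hρ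
    exact ⟨_, hmem, by rw [hcost]; exact hx⟩
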